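/- Let K arms have independent reward sequences, μ_{a,n} = E[μ_a(θ_a)|R_{a,1},…,R_{a,n}], and S_a(n) = Σ_{s=1}^n μ_{a,s−1}. Then E[max_{n∈N_T} Σ_a n_a · μ_{a,T−1}] ≥ E[max_{n∈N_T} Σ_a S_a(n_a)], where N_T = {(n_1,…,n_K) ∈ ℤ_+^K : Σ_a n_a = T}; i.e., W^{Irs.FH}(T,y) ≥ W^{Irs.V-Zero}(T,y). -/

import Mathlib

open MeasureTheory ProbabilityTheory

section Aux

variable {Ω : Type*} {m0 : MeasurableSpace Ω} {μ : Measure Ω} [IsProbabilityMeasure μ]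

theorem stmt_10_aux_condexp_sup_of_indep {m₁ m₂ m₃ : MeasurableSpace Ω} (hle₁ : m₁ ≤ m0)
    (hle₂ : m₂ ≤ m0)
    (h₃ : m₃ ≤ m₁) {f : Ω → ℝ} (hf : StronglyMeasurable[m₁] f) (hfi : Integrable f μ)
    (hindp : Indep m₁ m₂ μ) : μ[f | m₃ ⊔ m₂] =ᵐ[μ] μ[f | m₃] := by
  letI _inst : MeasurableSpace Ω := m0
  have hle₃ : m₃ ≤ m0 := h₃.trans hle₁
  have hlesup : m₃ ⊔ m₂ ≤ m0 := sup_le hle₃ hle₂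
  haveI : SigmaFinite (μ.trim hlesup) := by
    have : IsFiniteMeasure (μ.trim hlesup) := isFiniteMeasure_trim hlesup
    infer_instance
  haveI : SigmaFinite (μ.trim hle₃) := by
    have : IsFiniteMeasure (μ.trim hle₃) := isFiniteMeasure_trim hle₃
    infer_instance
  set g := μ[f | m₃] with hg
  have hgm : StronglyMeasurable[m₃] g := stronglyMeasurable_condExp
  have hgi : Integrable g μ := integrable_condExp
  have key : ∀ s : Set Ω, MeasurableSet[m₃ ⊔ m₂] s → ∫ x in s, g x ∂μ = ∫ x in s, f x ∂μ := by
    set 𝒮 : Set (Set Ω) :=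
      {u | ∃ A, MeasurableSet[m₃] A ∧ ∃ B, MeasurableSet[m₂] B ∧ u = A ∩ B} with h𝒮
    have h_eq : (m₃ ⊔ m₂) = MeasurableSpace.generateFrom 𝒮 := by
      refine le_antisymm (sup_le ?_ ?_) (MeasurableSpace.generateFrom_le ?_)
      · intro u hu
        exact MeasurableSpace.measurableSet_generateFrom
          ⟨u, hu, Set.univ, MeasurableSet.univ, (Set.inter_univ u).symm⟩
      · intro u hu
        exact MeasurableSpace.measurableSet_generateFrom
          ⟨Set.univ, MeasurableSet.univ, u, hu, (Set.univ_inter u).symm⟩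
      · rintro u ⟨A, hA, B, hB, rfl⟩
        exact ((le_sup_left : m₃ ≤ m₃ ⊔ m₂) _ hA).inter ((le_sup_right : m₂ ≤ m₃ ⊔ m₂) _ hB)
    have h_inter : IsPiSystem 𝒮 := by
      rintro u ⟨A, hA, B, hB, rfl⟩ v ⟨A', hA', B', hB', rfl⟩ _
      exact ⟨A ∩ A', hA.inter hA', B ∩ B', hB.inter hB', by rw [Set.inter_inter_inter_comm]⟩
    intro s hs
    refine MeasurableSpace.induction_on_inter (m := m₃ ⊔ m₂)
      (C := fun s _ => ∫ x in s, g x ∂μ = ∫ x in s, f x ∂μ) h_eq h_inter ?_ ?_ ?_ ?_ s hs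
    · simp
    · -- basic sets A ∩ B
      rintro u ⟨A, hA, B, hB, rfl⟩
      have hA0 : MeasurableSet[m0] A := hle₃ _ hA
      have hB0 : MeasurableSet[m0] B := hle₂ _ hB
      have prod_eq : ∀ (φ : Ω → ℝ), StronglyMeasurable[m₁] φ → Integrable φ μ →
          ∫ x in A ∩ B, φ x ∂μ = (∫ x in A, φ x ∂μ) * ∫ x, B.indicator (fun _ => (1:ℝ)) x ∂μ := by
        intro φ hφm hφi
        have hXm : Measurable[m₁] (A.indicator φ) := hφm.measurable.indicator (h₃ _ hA)
        have hYm : Measurable[m₂] (B.indicator (fun _ => (1:ℝ))) :=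
          measurable_const.indicator hB
        have hXY : IndepFun (A.indicator φ) (B.indicator (fun _ => (1:ℝ))) μ := by
          rw [IndepFun_iff_Indep]
          exact indep_of_indep_of_le_right (indep_of_indep_of_le_left hindp hXm.comap_le)
            hYm.comap_le
        have hXi : Integrable (A.indicator φ) μ := hφi.indicator hA0
        have hYi : Integrable (B.indicator (fun _ => (1:ℝ))) μ :=
          (integrable_const (1:ℝ)).indicator hB0
        have hmul := IndepFun.integral_mul_eq_mul_integral hXY hXi.aestronglyMeasurable hYi.aestronglyMeasurable
        have hmm : (A.indicator φ * B.indicator (fun _ => (1:ℝ)))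
            = (A ∩ B).indicator φ := by
          funext x
          by_cases hxA : x ∈ A <;> by_cases hxB : x ∈ B <;>
            simp [Set.indicator_apply, hxA, hxB, Pi.mul_apply]
        rw [hmm] at hmul
        rw [← integral_indicator (hA0.inter hB0), hmul, ← integral_indicator hA0]
      rw [prod_eq f hf hfi, prod_eq g (hgm.mono h₃) hgi]
      congr 1
      exact setIntegral_condExp hle₃ hfi hA
    · -- complement
      intro u hu hInd
      have hu0 : MeasurableSet[m0] u := hlesup _ hu
      rw [setIntegral_compl hu0 hgi, setIntegral_compl hu0 hfi, hInd, integral_condExp hle₃]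
    · -- disjoint unions
      intro v hdisj hmeas hInd
      have hv0 : ∀ i, MeasurableSet[m0] (v i) := fun i => hlesup _ (hmeas i)
      rw [integral_iUnion hv0 hdisj hgi.integrableOn, integral_iUnion hv0 hdisj hfi.integrableOn]
      exact tsum_congr hInd
  refine (ae_eq_condExp_of_forall_setIntegral_eq hlesup hfi
    (fun s _ _ => hgi.integrableOn) (fun s hs _ => key s hs) ?_).symm
  exact StronglyMeasurable.aestronglyMeasurable (hgm.mono le_sup_left)

omit [IsProbabilityMeasure μ] in
theorem stmt_10_aux_integrable_ciSup {ι : Type*} [Fintype ι] [Nonempty ι] {F : ι → Ω → ℝ}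
    (hF : ∀ i, Integrable (F i) μ) : Integrable (fun ω => ⨆ i, F i ω) μ := by
  have key : ∀ (s : Finset ι) (hs : s.Nonempty),
      Integrable (fun ω => s.sup' hs (fun i => F i ω)) μ := by
    intro s hs
    induction s using Finset.cons_induction with
    | empty => exact absurd hs (by simp)
    | cons a t ha ih =>
      rcases t.eq_empty_or_nonempty with rfl | ht
      · simpa using hF a
      · have : (fun ω => (Finset.cons a t ha).sup' hs (fun i => F i ω))
            = fun ω => (F a ω) ⊔ (t.sup' ht fun i => F i ω) := by
          funext ω; exact Finset.sup'_cons ht (fun i => F i ω)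
        rw [this]
        exact (hF a).sup (ih ht)
  have : (fun ω => ⨆ i, F i ω)
      = fun ω => Finset.univ.sup' Finset.univ_nonempty (fun i => F i ω) := by
    funext ω; rw [Finset.sup'_univ_eq_ciSup]
  rw [this]
  exact key _ _

theorem stmt_10_aux_step_integral {ι : Type*} [Fintype ι] [Nonempty ι] {𝒢 : MeasurableSpace Ω}
    (h𝒢 : 𝒢 ≤ m0) (A : ι → Ω → ℝ) (hA : ∀ i, StronglyMeasurable[𝒢] (A i))
    (hAi : ∀ i, Integrable (A i) μ) (γ : ι → ℕ) {D : Ω → ℝ} (hD : Integrable D μ)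
    (hDc : μ[D | 𝒢] =ᵐ[μ] 0) :
    ∫ ω, (⨆ i, (A i ω + ((γ i - 1 : ℕ) : ℝ) * D ω)) ∂μ
      ≤ ∫ ω, (⨆ i, (A i ω + (γ i : ℝ) * D ω)) ∂μ := by
  letI _inst : MeasurableSpace Ω := m0
  haveI : SigmaFinite (μ.trim h𝒢) := by
    have : IsFiniteMeasure (μ.trim h𝒢) := isFiniteMeasure_trim h𝒢
    infer_instance
  classical
  -- the 𝒢-measurable event where the "bonus" indicator is one
  set E : Set Ω := {ω | ∃ j, 1 ≤ γ j ∧ ∀ i, γ i = 0 → A i ω < A j ω} with hE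
  have hEmeas : MeasurableSet[𝒢] E := by
    have : E = ⋃ j, ((if 1 ≤ γ j then Set.univ else ∅) ∩
        ⋂ i, (if γ i = 0 then {ω | A i ω < A j ω} else Set.univ)) := by
      ext ω
      simp only [hE, Set.mem_setOf_eq, Set.mem_iUnion, Set.mem_inter_iff, Set.mem_iInter]
      constructor
      · rintro ⟨j, hj1, hj2⟩
        refine ⟨j, by simp [hj1], fun i => ?_⟩
        by_cases h0 : γ i = 0 <;> simp [h0, hj2 i]
      · rintro ⟨j, hj1, hj2⟩
        by_cases h1 : 1 ≤ γ j
        · refine ⟨j, h1, fun i h0 => ?_⟩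
          have := hj2 i; rwa [if_pos h0, Set.mem_setOf_eq] at this
        · rw [if_neg h1] at hj1; exact absurd hj1 (Set.notMem_empty ω)
    rw [this]
    refine MeasurableSet.iUnion fun j => MeasurableSet.inter ?_ (MeasurableSet.iInter fun i => ?_)
    · split <;> simp
    · split
      · exact measurableSet_lt (hA i).measurable (hA j).measurable
      · simp
  have hbdd : ∀ (v : ι → ℝ), BddAbove (Set.range v) := fun v =>
    (Set.finite_range v).bddAbove
  -- pointwise key inequality
  have hpt : ∀ ω, (⨆ i, (A i ω + ((γ i - 1 : ℕ) : ℝ) * D ω))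
      ≤ (⨆ i, (A i ω + (γ i : ℝ) * D ω)) - E.indicator D ω := by
    intro ω
    refine ciSup_le fun i => ?_
    by_cases hω : ω ∈ E
    · rw [Set.indicator_of_mem hω]
      obtain ⟨j, hj1, hj2⟩ := hω
      rcases Nat.eq_zero_or_pos (γ i) with h0 | h1
      · -- zero slope: A i ω ≤ sup - d
        rw [h0]
        simp only [Nat.zero_sub, Nat.cast_zero, zero_mul, add_zero]
        rcases le_or_gt 0 (D ω) with hd | hd
        · have : A i ω + D ω < A j ω + (γ j : ℝ) * D ω := by
            have h1' : (1 : ℝ) ≤ (γ j : ℝ) := by exact_mod_cast hj1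
            nlinarith [hj2 i h0]
          have hle := le_ciSup (hbdd fun k => A k ω + (γ k : ℝ) * D ω) j
          linarith
        · have hle := le_ciSup (hbdd fun k => A k ω + (γ k : ℝ) * D ω) i
          rw [h0] at hle
          simp only [Nat.cast_zero, zero_mul, add_zero] at hle
          linarith
      · -- positive slope
        have hcast : ((γ i - 1 : ℕ) : ℝ) = (γ i : ℝ) - 1 := by
          push_cast [Nat.cast_sub h1]; ring
        have hle := le_ciSup (hbdd fun k => A k ω + (γ k : ℝ) * D ω) i
        rw [hcast]
        linarith
    · rw [Set.indicator_of_notMem hω, sub_zero]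
      rcases Nat.eq_zero_or_pos (γ i) with h0 | h1
      · rw [h0]
        have hle := le_ciSup (hbdd fun k => A k ω + (γ k : ℝ) * D ω) i
        rw [h0] at hle
        simpa using hle
      · -- ¬∃j ... : for j := i there is k with γ k = 0 and A i ω ≤ A k ω
        rw [hE, Set.mem_setOf_eq] at hω
        push_neg at hω
        have hcast : ((γ i - 1 : ℕ) : ℝ) = (γ i : ℝ) - 1 := by
          push_cast [Nat.cast_sub h1]; ring
        rcases le_or_gt 0 (D ω) with hd | hd
        · have hle := le_ciSup (hbdd fun k => A k ω + (γ k : ℝ) * D ω) i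
          rw [hcast]
          nlinarith
        · obtain ⟨k, hk0, hk⟩ := hω i h1
          have hle := le_ciSup (hbdd fun k => A k ω + (γ k : ℝ) * D ω) k
          rw [hk0] at hle
          simp only [Nat.cast_zero, zero_mul, add_zero] at hle
          rw [hcast]
          nlinarith
  -- integrate
  have hint1 : Integrable (fun ω => ⨆ i, (A i ω + ((γ i - 1 : ℕ) : ℝ) * D ω)) μ :=
    stmt_10_aux_integrable_ciSup fun i => (hAi i).add (hD.const_mul _)
  have hint2 : Integrable (fun ω => ⨆ i, (A i ω + (γ i : ℝ) * D ω)) μ :=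
    stmt_10_aux_integrable_ciSup fun i => (hAi i).add (hD.const_mul _)
  have hintE : Integrable (E.indicator D) μ := hD.indicator (h𝒢 _ hEmeas)
  have h1 : ∫ ω, (⨆ i, (A i ω + ((γ i - 1 : ℕ) : ℝ) * D ω)) ∂μ
      ≤ ∫ ω, ((⨆ i, (A i ω + (γ i : ℝ) * D ω)) - E.indicator D ω) ∂μ :=
    integral_mono hint1 (hint2.sub hintE) hpt
  have h2 : ∫ ω, ((⨆ i, (A i ω + (γ i : ℝ) * D ω)) - E.indicator D ω) ∂μ
      = ∫ ω, (⨆ i, (A i ω + (γ i : ℝ) * D ω)) ∂μ - ∫ ω, E.indicator D ω ∂μ :=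
    integral_sub hint2 hintE
  have h3 : ∫ ω, E.indicator D ω ∂μ = 0 := by
    rw [integral_indicator (h𝒢 _ hEmeas)]
    have := setIntegral_condExp h𝒢 hD hEmeas
    rw [← this]
    calc ∫ ω in E, (μ[D | 𝒢]) ω ∂μ = ∫ ω in E, (0:ℝ) ∂μ :=
          integral_congr_ae (ae_restrict_of_ae hDc)
      _ = 0 := by simp
  linarith

end Aux

/-- `W^Irs.FH(T,y) ≥ W^Irs.V-Zero(T,y)`: with `μ_{a,n} = E[μ_a(θ_a)|R_{a,1},…,R_{a,n}]`
and `S_a(n) = Σ_{s=1}^n μ_{a,s−1}`, and arms independent,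
`E[max_{n∈N_T} Σ_a n_a·μ_{a,T−1}] ≥ E[max_{n∈N_T} Σ_a S_a(n_a)]`,
where `N_T` is the set of allocations of `T` pulls among the `K` arms. -/
theorem stmt_10 {Ω : Type*} {m0 : MeasurableSpace Ω} (μ : Measure Ω) [IsProbabilityMeasure μ]
    (K : ℕ) (hK : 0 < K) (T : ℕ) (hT : 0 < T)
    (f : Fin K → Ω → ℝ) (hf : ∀ a, Integrable (f a) μ)
    (R : Fin K → ℕ → Ω → ℝ) (hRmeas : ∀ a n, Measurable (R a n))
    -- the arms (mean reward together with the reward sequence) are independent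
    (hindep : iIndepFun
      (fun a ω => ((f a ω, fun n : ℕ => R a n ω) : ℝ × (ℕ → ℝ))) μ)
    (H : Fin K → ℕ → MeasurableSpace Ω)
    (hH : ∀ a n, H a n = ⨆ i : Fin n, MeasurableSpace.comap (R a i) (borel ℝ))
    (h1 : Integrable (fun ω =>
      ⨆ p : {n : Fin K → Fin (T + 1) // ∑ a, (n a : ℕ) = T},
        ∑ a, ((p.1 a : ℕ) : ℝ) * (μ[f a | H a (T - 1)]) ω) μ)
    (h2 : Integrable (fun ω =>
      ⨆ p : {n : Fin K → Fin (T + 1) // ∑ a, (n a : ℕ) = T},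
        ∑ a, ∑ s ∈ Finset.range (p.1 a), (μ[f a | H a s]) ω) μ) :
    ∫ ω, (⨆ p : {n : Fin K → Fin (T + 1) // ∑ a, (n a : ℕ) = T},
        ∑ a, ((p.1 a : ℕ) : ℝ) * (μ[f a | H a (T - 1)]) ω) ∂μ
      ≥ ∫ ω, (⨆ p : {n : Fin K → Fin (T + 1) // ∑ a, (n a : ℕ) = T},
        ∑ a, ∑ s ∈ Finset.range (p.1 a), (μ[f a | H a s]) ω) ∂μ := by
  classical
  set P := {n : Fin K → Fin (T + 1) // ∑ a, (n a : ℕ) = T} with hP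
  haveI hPne : Nonempty P := by
    refine ⟨⟨fun a => if a = ⟨0, hK⟩ then ⟨T, Nat.lt_succ_self T⟩ else ⟨0, Nat.succ_pos T⟩, ?_⟩⟩
    have : ∀ a : Fin K,
        (((if a = ⟨0, hK⟩ then (⟨T, Nat.lt_succ_self T⟩ : Fin (T+1)) else ⟨0, Nat.succ_pos T⟩)
          : Fin (T+1)) : ℕ) = if a = ⟨0, hK⟩ then T else 0 := by
      intro a; split <;> rfl
    simp only [this]
    rw [Finset.sum_ite_eq' Finset.univ (⟨0, hK⟩ : Fin K) (fun _ => T)]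
    simp
  -- the reward sequence of each arm and the σ-algebra it generates
  set Rseq : Fin K → Ω → (ℕ → ℝ) := fun a ω n => R a n ω with hRseq
  have hRseqm : ∀ a, Measurable (Rseq a) := fun a => measurable_pi_lambda _ (fun n => hRmeas a n)
  set marm : Fin K → MeasurableSpace Ω :=
    fun a => MeasurableSpace.comap (Rseq a) (inferInstance : MeasurableSpace (ℕ → ℝ)) with hmarm
  have hmarmle : ∀ a, marm a ≤ m0 := fun a => (hRseqm a).comap_le
  have hHle : ∀ a u, H a u ≤ marm a := by
    intro a u
    rw [hH]
    refine iSup_le fun i => ?_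
    have h1' : MeasurableSpace.comap (R a i) (borel ℝ)
        = ((borel ℝ).comap (fun g : ℕ → ℝ => g i)).comap (Rseq a) := by
      rw [MeasurableSpace.comap_comp]; rfl
    rw [h1']
    refine MeasurableSpace.comap_mono ?_
    have hbR : (borel ℝ) = (inferInstance : MeasurableSpace ℝ) := Real.borelSpace.measurable_eq.symm
    rw [hbR]
    exact (measurable_pi_apply ((i : ℕ))).comap_le
  have hHm0 : ∀ a u, H a u ≤ m0 := fun a u => (hHle a u).trans (hmarmle a)
  have hHmono : ∀ (a : Fin K) (u v : ℕ), u ≤ v → H a u ≤ H a v := by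
    intro a u v huv
    rw [hH, hH]
    exact iSup_le fun i => le_iSup_of_le (⟨i.1, lt_of_lt_of_le i.2 huv⟩ : Fin v) le_rfl
  -- posterior means
  set ce : Fin K → ℕ → Ω → ℝ := fun a u => μ[f a | H a u] with hce
  have hceSM : ∀ a u, StronglyMeasurable[H a u] (ce a u) := fun a u => stronglyMeasurable_condExp
  have hceInt : ∀ a u, Integrable (ce a u) μ := fun a u => integrable_condExp
  -- the hybrid per-arm term
  set term : Fin K → ℕ → ℕ → Ω → ℝ := fun a θa n ω =>
    (∑ u ∈ Finset.range (min n θa), ce a u ω) + ((n - min n θa : ℕ) : ℝ) * ce a (T-1) ω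
    with hterm
  set Φ : (Fin K → ℕ) → P → Ω → ℝ := fun θ p ω => ∑ a, term a (θ a) ((p.1 a : ℕ)) ω with hΦ
  have hterm_sm : ∀ a θa n, StronglyMeasurable[marm a] (term a θa n) := by
    intro a θa n
    refine StronglyMeasurable.add ?_ ?_
    · exact Finset.stronglyMeasurable_fun_sum _ fun u _ => (hceSM a u).mono (hHle a u)
    · exact stronglyMeasurable_const.mul ((hceSM a (T-1)).mono (hHle a (T-1)))
  have hterm_int : ∀ a θa n, Integrable (term a θa n) μ := by
    intro a θa n
    exact (integrable_finset_sum _ fun u _ => hceInt a u).add ((hceInt a (T-1)).const_mul _)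
  have hΦ_int : ∀ θ p, Integrable (Φ θ p) μ := fun θ p =>
    integrable_finset_sum _ fun a _ => hterm_int a (θ a) _
  -- THE STEP
  have step : ∀ (θ : Fin K → ℕ) (a₀ : Fin K) (t : ℕ), t + 1 ≤ T → θ a₀ = t + 1 →
      ∫ ω, (⨆ p : P, Φ θ p ω) ∂μ ≤ ∫ ω, (⨆ p : P, Φ (Function.update θ a₀ t) p ω) ∂μ := by
    intro θ a₀ t htT hθa₀
    set M₂ : MeasurableSpace Ω := ⨆ b ∈ ({a₀}ᶜ : Set (Fin K)), marm b with hM₂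
    have hM₂le : M₂ ≤ m0 := by
      rw [hM₂]; exact iSup₂_le fun b _ => hmarmle b
    set 𝒢 : MeasurableSpace Ω := H a₀ t ⊔ M₂ with h𝒢def
    have h𝒢 : 𝒢 ≤ m0 := sup_le (hHm0 a₀ t) hM₂le
    have hii : iIndep marm μ := by
      have hcomp := hindep.comp (fun _ => Prod.snd) (fun _ => measurable_snd)
      have heq : (fun a => Prod.snd ∘ (fun ω => ((f a ω, fun n : ℕ => R a n ω) : ℝ × (ℕ → ℝ))))
          = Rseq := rfl
      rw [heq] at hcomp
      rw [hmarm]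
      exact (iIndepFun_iff_iIndep _ _ _).mp hcomp
    have hIndep : Indep (marm a₀) M₂ μ := by
      have hbi := indep_biSup_compl hmarmle hii {a₀}
      rw [hM₂]
      simpa using hbi
    set D : Ω → ℝ := fun ω => ce a₀ (T-1) ω - ce a₀ t ω with hDdef
    have hDi : Integrable D μ := (hceInt a₀ (T-1)).sub (hceInt a₀ t)
    have hDc : μ[D | 𝒢] =ᵐ[μ] 0 := by
      have e1 : μ[ce a₀ (T-1) | 𝒢] =ᵐ[μ] μ[ce a₀ (T-1) | H a₀ t] := by
        rw [h𝒢def]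
        exact stmt_10_aux_condexp_sup_of_indep (hmarmle a₀) hM₂le (hHle a₀ t)
          ((hceSM a₀ (T-1)).mono (hHle a₀ (T-1))) (hceInt a₀ (T-1)) hIndep
      have e2 : μ[ce a₀ (T-1) | H a₀ t] =ᵐ[μ] ce a₀ t := by
        rw [hce]
        exact condExp_condExp_of_le (hHmono a₀ t (T-1) (by omega)) (hHm0 a₀ (T-1))
      have e3 : μ[ce a₀ t | 𝒢] = ce a₀ t :=
        condExp_of_stronglyMeasurable h𝒢 ((hceSM a₀ t).mono le_sup_left) (hceInt a₀ t)
      have e4 : μ[D | 𝒢] =ᵐ[μ] μ[ce a₀ (T-1) | 𝒢] - μ[ce a₀ t | 𝒢] := by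
        rw [hDdef]
        exact condExp_sub (hceInt a₀ (T-1)) (hceInt a₀ t) 𝒢
      filter_upwards [e1, e2, e4] with ω k1 k2 k4
      have k3 : (μ[ce a₀ t | 𝒢]) ω = ce a₀ t ω := by rw [e3]
      rw [k4, Pi.sub_apply, k1, k2, k3, sub_self]
      rfl
    set γ : P → ℕ := fun p => (p.1 a₀ : ℕ) - t with hγ
    set A : P → Ω → ℝ := fun p ω =>
      ((∑ u ∈ Finset.range (min ((p.1 a₀ : ℕ)) t), ce a₀ u ω) + (γ p : ℝ) * ce a₀ t ω)
        + ∑ b ∈ Finset.univ.erase a₀, term b (θ b) ((p.1 b : ℕ)) ω with hA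
    have hASM : ∀ p, StronglyMeasurable[𝒢] (A p) := by
      intro p
      refine StronglyMeasurable.add (StronglyMeasurable.add ?_ ?_) ?_
      · refine Finset.stronglyMeasurable_fun_sum _ fun u hu => ?_
        have hut : u ≤ t :=
          le_of_lt (lt_of_lt_of_le (Finset.mem_range.mp hu) (min_le_right _ _))
        exact (hceSM a₀ u).mono ((hHmono a₀ u t hut).trans le_sup_left)
      · exact stronglyMeasurable_const.mul ((hceSM a₀ t).mono le_sup_left)
      · refine Finset.stronglyMeasurable_fun_sum _ fun b hb => ?_
        have hbne : b ≠ a₀ := (Finset.mem_erase.mp hb).1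
        have hle' : marm b ≤ 𝒢 := by
          rw [h𝒢def, hM₂]
          exact le_trans
            (le_iSup₂ (f := fun (b : Fin K) (_ : b ∈ ({a₀}ᶜ : Set (Fin K))) => marm b) b hbne)
            le_sup_right
        exact (hterm_sm b (θ b) _).mono hle'
    have hAi : ∀ p, Integrable (A p) μ := fun p =>
      ((integrable_finset_sum _ fun u _ => hceInt a₀ u).add ((hceInt a₀ t).const_mul _)).add
        (integrable_finset_sum _ fun b _ => hterm_int b (θ b) _)
    -- pointwise identities
    have armL : ∀ (n : ℕ) (ω : Ω), term a₀ t n ω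
        = ((∑ u ∈ Finset.range (min n t), ce a₀ u ω) + ((n - t : ℕ) : ℝ) * ce a₀ t ω)
          + ((n - t : ℕ) : ℝ) * D ω := by
      intro n ω
      have hmin : n - min n t = n - t := by
        rcases le_total n t with h | h
        · rw [min_eq_left h]; omega
        · rw [min_eq_right h]
      rw [hterm, hDdef]
      simp only [hmin]
      ring
    have armR : ∀ (n : ℕ) (ω : Ω), term a₀ (t+1) n ω
        = ((∑ u ∈ Finset.range (min n t), ce a₀ u ω) + ((n - t : ℕ) : ℝ) * ce a₀ t ω)
          + ((n - t - 1 : ℕ) : ℝ) * D ω := by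
      intro n ω
      rcases le_or_gt n t with h | h
      · have h1' : min n (t+1) = n := min_eq_left (by omega)
        have h2' : min n t = n := min_eq_left h
        have h3' : n - t = 0 := by omega
        rw [hterm, hDdef]
        simp [h1', h2', h3']
      · have h1' : min n (t+1) = t+1 := min_eq_right (by omega)
        have h2' : min n t = t := min_eq_right (by omega)
        obtain ⟨k, hk⟩ : ∃ k, n - t = k + 1 := ⟨n - t - 1, by omega⟩
        have h4' : n - (t+1) = k := by omega
        have h6' : n - t - 1 = k := by omega
        rw [hterm, hDdef]
        simp only [h1', h2', h4', h6', hk, Finset.sum_range_succ]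
        push_cast
        ring
    have keyL : ∀ (p : P) (ω : Ω), Φ (Function.update θ a₀ t) p ω = A p ω + (γ p : ℝ) * D ω := by
      intro p ω
      simp only [hΦ, hA, hγ]
      rw [← Finset.add_sum_erase _ (fun a => term a (Function.update θ a₀ t a) ((p.1 a : ℕ)) ω)
        (Finset.mem_univ a₀)]
      rw [Function.update_self]
      have herase : ∑ b ∈ Finset.univ.erase a₀,
            term b (Function.update θ a₀ t b) ((p.1 b : ℕ)) ω
          = ∑ b ∈ Finset.univ.erase a₀, term b (θ b) ((p.1 b : ℕ)) ω :=
        Finset.sum_congr rfl fun b hb => by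
          rw [Function.update_of_ne (Finset.mem_erase.mp hb).1]
      rw [herase, armL ((p.1 a₀ : ℕ)) ω]
      ring
    have keyR : ∀ (p : P) (ω : Ω), Φ θ p ω = A p ω + ((γ p - 1 : ℕ) : ℝ) * D ω := by
      intro p ω
      simp only [hΦ, hA, hγ]
      rw [← Finset.add_sum_erase _ (fun a => term a (θ a) ((p.1 a : ℕ)) ω) (Finset.mem_univ a₀)]
      rw [hθa₀, armR ((p.1 a₀ : ℕ)) ω]
      ring
    have goalL : (fun ω => ⨆ p : P, Φ θ p ω)
        = fun ω => ⨆ p : P, (A p ω + ((γ p - 1 : ℕ) : ℝ) * D ω) :=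
      funext fun ω => iSup_congr fun p => keyR p ω
    have goalR : (fun ω => ⨆ p : P, Φ (Function.update θ a₀ t) p ω)
        = fun ω => ⨆ p : P, (A p ω + (γ p : ℝ) * D ω) :=
      funext fun ω => iSup_congr fun p => keyL p ω
    rw [goalL, goalR]
    exact stmt_10_aux_step_integral h𝒢 A hASM hAi γ hDi hDc

  -- THE CHAIN
  have chain : ∀ (N : ℕ) (θ : Fin K → ℕ), (∀ a, θ a ≤ T) → (∑ a, θ a = N) →
      ∫ ω, (⨆ p : P, Φ θ p ω) ∂μ ≤ ∫ ω, (⨆ p : P, Φ (fun _ => 0) p ω) ∂μ := by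
    intro N
    induction N with
    | zero =>
      intro θ hle hsum
      have : θ = fun _ => 0 := by
        funext a
        have := (Finset.sum_eq_zero_iff.mp hsum) a (Finset.mem_univ a)
        simpa using this
      rw [this]
    | succ N ih =>
      intro θ hle hsum
      have hex : ∃ a, 0 < θ a := by
        by_contra hc
        push_neg at hc
        have : ∑ a, θ a = 0 := Finset.sum_eq_zero fun a _ => Nat.le_zero.mp (hc a)
        omega
      obtain ⟨a₀, ha₀⟩ := hex
      set t := θ a₀ - 1 with ht
      have hθa₀ : θ a₀ = t + 1 := by omega
      refine le_trans (step θ a₀ t (by have := hle a₀; omega) hθa₀) (ih _ ?_ ?_)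
      · intro a
        by_cases hba : a = a₀
        · subst hba; rw [Function.update_self]; have := hle a; omega
        · rw [Function.update_of_ne hba]; exact hle a
      · have h1' : ∑ a, Function.update θ a₀ t a
            = t + ∑ a ∈ Finset.univ.erase a₀, θ a := by
          rw [Finset.erase_eq]
          exact Finset.sum_update_of_mem (Finset.mem_univ a₀) _ _
        have h2' : θ a₀ + ∑ a ∈ Finset.univ.erase a₀, θ a = ∑ a, θ a :=
          Finset.add_sum_erase _ _ (Finset.mem_univ a₀)
        omega
  -- ENDPOINTS
  have hrhs : (fun ω => ⨆ p : P, ∑ a, ∑ s ∈ Finset.range ((p.1 a : ℕ)), ce a s ω)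
      = fun ω => ⨆ p : P, Φ (fun _ => T) p ω := by
    funext ω
    refine iSup_congr fun p => Finset.sum_congr rfl fun a _ => ?_
    have hle' : (p.1 a : ℕ) ≤ T := Nat.lt_succ_iff.mp (p.1 a).2
    rw [hterm]
    simp only [min_eq_left hle', Nat.sub_self, Nat.cast_zero, zero_mul, add_zero]
  have hlhs : (fun ω => ⨆ p : P, ∑ a, ((p.1 a : ℕ) : ℝ) * ce a (T-1) ω)
      = fun ω => ⨆ p : P, Φ (fun _ => 0) p ω := by
    funext ω
    refine iSup_congr fun p => Finset.sum_congr rfl fun a _ => ?_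
    rw [hterm]
    simp
  rw [ge_iff_le, hce] at *
  calc ∫ ω, (⨆ p : P, ∑ a, ∑ s ∈ Finset.range ((p.1 a : ℕ)), ce a s ω) ∂μ
      = ∫ ω, (⨆ p : P, Φ (fun _ => T) p ω) ∂μ := by rw [hrhs]
    _ ≤ ∫ ω, (⨆ p : P, Φ (fun _ => 0) p ω) ∂μ :=
        chain (∑ _a : Fin K, T) (fun _ => T) (fun _ => le_rfl) rfl
    _ = ∫ ω, (⨆ p : P, ∑ a, ((p.1 a : ℕ) : ℝ) * ce a (T-1) ω) ∂μ := by rw [hlhs]
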